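/- Let x, z : Fin K → ℝ both be antitone, and suppose x majorizes z, i.e., Σ_{n < m} z_n ≤ Σ_{n < m} x_n for every m ≤ K with Σ_{n < K} z_n = Σ_{n < K} x_n. Then there exists a real orthogonal K×K matrix U such that for every k, (Uᵀ · (diagonal x) · U)_{kk} = z_k. -/

import Mathlib

open Matrix Finset
namespace MajAux

def rotM {m : ℕ} (c s : ℝ) : Matrix (Fin (m+2)) (Fin (m+2)) ℝ :=
  Matrix.of fun a b =>
    if a = 0 then (if b = 0 then c else if b = 1 then -s else 0)
    else if a = 1 then (if b = 0 then s else if b = 1 then c else 0)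
    else if a = b then 1 else 0

lemma ss_ne_zero {m : ℕ} (i : Fin m) : (i.succ.succ : Fin (m+2)) ≠ 0 := Fin.succ_ne_zero _
lemma ss_ne_one {m : ℕ} (i : Fin m) : (i.succ.succ : Fin (m+2)) ≠ 1 := by
  rw [← Fin.succ_zero_eq_one]; intro h; exact Fin.succ_ne_zero i (Fin.succ_injective _ h)
lemma rotM_apply_ss {m : ℕ} (c s : ℝ) (i : Fin m) (b : Fin (m+2)) :
    rotM c s i.succ.succ b = if i.succ.succ = b then 1 else 0 := by
  simp [rotM, ss_ne_zero i, ss_ne_one i]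
lemma rotM_apply_zero {m : ℕ} (c s : ℝ) (b : Fin (m+2)) :
    rotM c s 0 b = if b = 0 then c else if b = 1 then -s else 0 := by simp [rotM]
lemma rotM_apply_one {m : ℕ} (c s : ℝ) (b : Fin (m+2)) :
    rotM c s 1 b = if b = 0 then s else if b = 1 then c else 0 := by
  simp [rotM, Fin.one_eq_zero_iff]
lemma one_ne_zero' {m : ℕ} : (1 : Fin (m+2)) ≠ 0 := by
  rw [← Fin.succ_zero_eq_one]; exact Fin.succ_ne_zero _

lemma rot_conj_entry {m : ℕ} (c s : ℝ) (x' : Fin (m+2) → ℝ) (p q : Fin (m+2)) :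
    (((rotM c s)ᵀ * Matrix.diagonal x' * rotM c s : Matrix (Fin (m+2)) (Fin (m+2)) ℝ)) p q
      = x' 0 * rotM c s 0 p * rotM c s 0 q + x' 1 * rotM c s 1 p * rotM c s 1 q
        + ∑ i : Fin m, x' i.succ.succ *
            ((if i.succ.succ = p then (1:ℝ) else 0) * (if i.succ.succ = q then 1 else 0)) := by
  rw [Matrix.mul_assoc, Matrix.mul_apply]
  have : ∀ a, ((rotM (m := m) c s)ᵀ) p a * ((Matrix.diagonal x' * rotM c s : Matrix (Fin (m+2)) (Fin (m+2)) ℝ)) a q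
      = x' a * (rotM c s a p * rotM c s a q) := by
    intro a
    rw [Matrix.transpose_apply, Matrix.diagonal_mul]
    ring
  rw [Finset.sum_congr rfl (fun a _ => this a)]
  rw [Fin.sum_univ_succ, Fin.sum_univ_succ]
  simp only [Fin.succ_zero_eq_one, rotM_apply_ss]
  ring



lemma rot_conj_00 {m : ℕ} (c s : ℝ) (x' : Fin (m+2) → ℝ) :
    (((rotM c s)ᵀ * Matrix.diagonal x' * rotM c s : Matrix (Fin (m+2)) (Fin (m+2)) ℝ)) 0 0
      = c^2 * x' 0 + s^2 * x' 1 := by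
  rw [rot_conj_entry]
  simp [rotM_apply_zero, rotM_apply_one, fun i : Fin m => ss_ne_zero i]
  ring

lemma rot_conj_succ_succ {m : ℕ} (c s : ℝ) (x' : Fin (m+2) → ℝ) (p q : Fin (m+1)) :
    (((rotM c s)ᵀ * Matrix.diagonal x' * rotM c s : Matrix (Fin (m+2)) (Fin (m+2)) ℝ))
        p.succ q.succ
      = Matrix.diagonal (fun k : Fin (m+1) =>
          if k = 0 then s^2 * x' 0 + c^2 * x' 1 else x' k.succ) p q := by
  rw [rot_conj_entry]
  induction p using Fin.cases with
  | zero =>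
    induction q using Fin.cases with
    | zero =>
      simp only [Fin.succ_zero_eq_one]
      simp [rotM_apply_zero, rotM_apply_one, one_ne_zero', fun i : Fin m => ss_ne_one i,
        Matrix.diagonal]
      ring
    | succ q' =>
      simp only [Fin.succ_zero_eq_one]
      simp [rotM_apply_zero, rotM_apply_one, one_ne_zero', ss_ne_zero q', ss_ne_one q',
        fun i : Fin m => ss_ne_one i, Matrix.diagonal, (Fin.succ_ne_zero q').symm]
  | succ p' =>
    induction q using Fin.cases with
    | zero =>
      simp only [Fin.succ_zero_eq_one]
      simp [rotM_apply_zero, rotM_apply_one, one_ne_zero', ss_ne_zero p', ss_ne_one p',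
        fun i : Fin m => ss_ne_one i, Matrix.diagonal, Fin.succ_ne_zero p']
    | succ q' =>
      simp [rotM_apply_zero, rotM_apply_one, ss_ne_zero p', ss_ne_one p', ss_ne_zero q',
        ss_ne_one q', Matrix.diagonal, Fin.succ_inj, mul_ite, ite_mul,
        Finset.sum_ite_eq, Fin.succ_ne_zero, eq_comm]
      split
      · next h => rw [h]
      · rfl


def blockV {n : ℕ} (W : Matrix (Fin n) (Fin n) ℝ) : Matrix (Fin (n+1)) (Fin (n+1)) ℝ :=
  Matrix.of fun a b =>
    Fin.cases (Fin.cases (1:ℝ) (fun _ => 0) b) (fun a' => Fin.cases (0:ℝ) (fun b' => W a' b') b) a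

@[simp] lemma blockV_00 {n : ℕ} (W : Matrix (Fin n) (Fin n) ℝ) : blockV W 0 0 = 1 := rfl
@[simp] lemma blockV_0s {n : ℕ} (W : Matrix (Fin n) (Fin n) ℝ) (b : Fin n) :
    blockV W 0 b.succ = 0 := by simp [blockV]
@[simp] lemma blockV_s0 {n : ℕ} (W : Matrix (Fin n) (Fin n) ℝ) (a : Fin n) :
    blockV W a.succ 0 = 0 := by simp [blockV]
@[simp] lemma blockV_ss {n : ℕ} (W : Matrix (Fin n) (Fin n) ℝ) (a b : Fin n) :
    blockV W a.succ b.succ = W a b := by simp [blockV]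

lemma blockV_orth {n : ℕ} (W : Matrix (Fin n) (Fin n) ℝ) (hW : Wᵀ * W = 1) :
    (blockV W)ᵀ * blockV W = 1 := by
  ext p q
  rw [Matrix.mul_apply]
  simp only [Matrix.transpose_apply]
  rw [Fin.sum_univ_succ]
  induction p using Fin.cases with
  | zero =>
    induction q using Fin.cases with
    | zero => simp [Matrix.one_apply]
    | succ q' => simp [Matrix.one_apply, (Fin.succ_ne_zero q').symm]
  | succ p' =>
    induction q using Fin.cases with
    | zero => simp [Matrix.one_apply, Fin.succ_ne_zero p']
    | succ q' =>
      simp only [blockV_0s, blockV_s0, blockV_ss, zero_mul, mul_zero, zero_add]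
      have := congrFun (congrFun hW p') q'
      rw [Matrix.mul_apply] at this
      simp only [Matrix.transpose_apply] at this
      rw [this]
      simp [Matrix.one_apply, Fin.succ_inj]

lemma blockV_conj_00 {n : ℕ} (W : Matrix (Fin n) (Fin n) ℝ)
    (M : Matrix (Fin (n+1)) (Fin (n+1)) ℝ) :
    (((blockV W)ᵀ * M * blockV W : Matrix (Fin (n+1)) (Fin (n+1)) ℝ)) 0 0 = M 0 0 := by
  rw [Matrix.mul_assoc, Matrix.mul_apply]
  have h1 : ∀ a, ((M * blockV W : Matrix (Fin (n+1)) (Fin (n+1)) ℝ)) a 0 = M a 0 := by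
    intro a
    rw [Matrix.mul_apply, Fin.sum_univ_succ]
    simp
  rw [Fin.sum_univ_succ]
  simp only [Matrix.transpose_apply, h1, blockV_00, blockV_s0, zero_mul, one_mul]
  simp

lemma blockV_conj_ss {n : ℕ} (W : Matrix (Fin n) (Fin n) ℝ)
    (M : Matrix (Fin (n+1)) (Fin (n+1)) ℝ) (k l : Fin n) :
    (((blockV W)ᵀ * M * blockV W : Matrix (Fin (n+1)) (Fin (n+1)) ℝ)) k.succ l.succ
      = ((Wᵀ * Matrix.of (fun a b : Fin n => M a.succ b.succ) * W
          : Matrix (Fin n) (Fin n) ℝ)) k l := by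
  rw [Matrix.mul_assoc, Matrix.mul_apply, Matrix.mul_assoc, Matrix.mul_apply]
  have h1 : ∀ a, ((M * blockV W : Matrix (Fin (n+1)) (Fin (n+1)) ℝ)) a l.succ
      = ∑ b : Fin n, M a b.succ * W b l := by
    intro a
    rw [Matrix.mul_apply, Fin.sum_univ_succ]
    simp
  rw [Fin.sum_univ_succ]
  simp only [Matrix.transpose_apply, h1, blockV_0s, blockV_ss, zero_mul, zero_add]
  apply Finset.sum_congr rfl
  intro a _
  rw [Matrix.mul_apply]
  simp [Finset.mul_sum, Matrix.mul_apply]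


lemma sum_filter_eq_range {K : ℕ} (f : Fin K → ℝ) (m : ℕ) (hm : m ≤ K) :
    ∑ n ∈ Finset.univ.filter (fun n : Fin K => (n : ℕ) < m), f n
      = ∑ i ∈ Finset.range m, (if h : i < K then f ⟨i, h⟩ else 0) := by
  rw [Finset.sum_filter]
  have h1 : ∀ n : Fin K, (if (n : ℕ) < m then f n else 0)
      = (fun i : ℕ => if i < m then (if h : i < K then f ⟨i, h⟩ else 0) else 0) (n : ℕ) := by
    intro n
    simp [n.isLt]
  rw [Finset.sum_congr rfl fun n _ => h1 n,
    Fin.sum_univ_eq_sum_range (fun i : ℕ => if i < m then (if h : i < K then f ⟨i, h⟩ else 0) else 0) K]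
  rw [← Finset.sum_subset (Finset.range_subset_range.mpr hm)
    (fun i _ hi => if_neg (by simpa using hi))]
  apply Finset.sum_congr rfl
  intro i hi
  rw [if_pos (Finset.mem_range.mp hi)]

lemma sum_univ_eq_range {K : ℕ} (f : Fin K → ℝ) :
    ∑ n : Fin K, f n = ∑ i ∈ Finset.range K, (if h : i < K then f ⟨i, h⟩ else 0) := by
  rw [← sum_filter_eq_range f K le_rfl]
  apply Finset.sum_congr
  · ext n; simp [n.isLt]
  · intros; rfl


section NatWorld

variable (m j : ℕ) (X Z : ℕ → ℝ)

/-- the reduced vector -/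
def natY : ℕ → ℝ := fun i => if i < j then X i else if i = j then X j + X (j+1) - Z 0 else X (i+1)

variable {m j X Z}

lemma natY_lt {i : ℕ} (h : i < j) : natY j X Z i = X i := by
  unfold natY; rw [if_pos h]

lemma natY_eq {i : ℕ} (h : i = j) : natY j X Z i = X j + X (j+1) - Z 0 := by
  unfold natY; rw [if_neg (by omega), if_pos h]

lemma natY_gt {i : ℕ} (h : j < i) : natY j X Z i = X (i+1) := by
  unfold natY; rw [if_neg (by omega), if_neg (by omega)]

lemma natY_anti (hXanti : ∀ i i', i ≤ i' → i' ≤ m + 1 → X i' ≤ X i)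
    (hjm : j ≤ m) (hb : X (j+1) ≤ Z 0) (ha : Z 0 ≤ X j) :
    ∀ i i', i ≤ i' → i' ≤ m → natY j X Z i' ≤ natY j X Z i := by
  intro i i' hii' him
  rcases lt_trichotomy i j with hij | hij | hij
  · rw [natY_lt hij]
    rcases lt_trichotomy i' j with h2 | h2 | h2
    · rw [natY_lt h2]
      exact hXanti i i' hii' (by omega)
    · rw [natY_eq h2]
      have := hXanti i j (by omega) (by omega)
      linarith
    · rw [natY_gt h2]
      have := hXanti i (i'+1) (by omega) (by omega)
      linarith
  · rw [natY_eq hij]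
    rcases eq_or_lt_of_le hii' with h2 | h2
    · rw [← h2, natY_eq hij]
    · rw [natY_gt (by omega)]
      have := hXanti (j+1) (i'+1) (by omega) (by omega)
      linarith
  · rw [natY_gt hij, natY_gt (by omega)]
    exact hXanti (i+1) (i'+1) (by omega) (by omega)

lemma natY_sum_le {M : ℕ} (hMj : M ≤ j) :
    ∑ i ∈ Finset.range M, natY j X Z i = ∑ i ∈ Finset.range M, X i := by
  apply Finset.sum_congr rfl
  intro i hi
  exact natY_lt (by have := Finset.mem_range.mp hi; omega)

lemma natY_sum_gt {M : ℕ} (hMj : j < M) :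
    ∑ i ∈ Finset.range M, natY j X Z i = ∑ i ∈ Finset.range (M+1), X i - Z 0 := by
  induction M with
  | zero => omega
  | succ M ihM =>
    rcases Nat.lt_or_ge j M with h | h
    · rw [Finset.sum_range_succ, ihM h, natY_gt h,
        Finset.sum_range_succ (f := X) (n := M+1)]
      ring
    · have hMeq : j = M := by omega
      rw [Finset.sum_range_succ, natY_sum_le (by omega), natY_eq hMeq.symm,
        Finset.sum_range_succ (f := X) (n := M+1), Finset.sum_range_succ (f := X) (n := M),
        ← hMeq]
      ring

lemma nat_majy (hXanti : ∀ i i', i ≤ i' → i' ≤ m + 1 → X i' ≤ X i)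
    (hZanti : ∀ i i', i ≤ i' → i' ≤ m + 1 → Z i' ≤ Z i)
    (hmaj' : ∀ M ≤ m + 2, ∑ i ∈ Finset.range M, Z i ≤ ∑ i ∈ Finset.range M, X i)
    (hjm : j ≤ m) (hb : X (j+1) ≤ Z 0) (ha : Z 0 ≤ X j) :
    ∀ M ≤ m + 1, ∑ i ∈ Finset.range M, Z (i+1) ≤ ∑ i ∈ Finset.range M, natY j X Z i := by
  intro M hM
  rcases le_or_gt M j with h | h
  · rw [natY_sum_le h]
    apply Finset.sum_le_sum
    intro i hi
    have hi' := Finset.mem_range.mp hi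
    calc Z (i+1) ≤ Z 0 := hZanti 0 (i+1) (by omega) (by omega)
    _ ≤ X j := ha
    _ ≤ X i := by
        rcases Nat.eq_or_lt_of_le (show i ≤ j by omega) with h2 | h2
        · rw [h2]
        · exact hXanti i j (by omega) (by omega)
  · rw [natY_sum_gt h]
    have h1 := hmaj' (M+1) (by omega)
    have h2 : ∑ i ∈ Finset.range (M+1), Z i = Z 0 + ∑ i ∈ Finset.range M, Z (i+1) := by
      rw [Finset.sum_range_succ' (fun i => Z i) M]
      ring
    linarith

lemma nat_sumy {m : ℕ} (hjm : j ≤ m)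
    (hsum' : ∑ i ∈ Finset.range (m+2), Z i = ∑ i ∈ Finset.range (m+2), X i) :
    ∑ i ∈ Finset.range (m+1), Z (i+1) = ∑ i ∈ Finset.range (m+1), natY j X Z i := by
  rw [natY_sum_gt (by omega)]
  have h2 : ∑ i ∈ Finset.range (m+2), Z i = Z 0 + ∑ i ∈ Finset.range (m+1), Z (i+1) := by
    rw [Finset.sum_range_succ' (fun i => Z i) (m+1)]
    ring
  linarith

end NatWorld

lemma orth_mul {n : ℕ} (A B : Matrix (Fin n) (Fin n) ℝ) (hA : Aᵀ*A = 1) (hB : Bᵀ*B = 1) :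
    (A*B)ᵀ*(A*B) = 1 := by
  rw [Matrix.transpose_mul, Matrix.mul_assoc, ← Matrix.mul_assoc Aᵀ, hA, Matrix.one_mul, hB]

lemma conj_mul {n : ℕ} (A B D : Matrix (Fin n) (Fin n) ℝ) :
    (A*B)ᵀ * D * (A*B) = Bᵀ * (Aᵀ * D * A) * B := by
  simp only [Matrix.transpose_mul, Matrix.mul_assoc]



/-- permutation matrix -/
def permM {n : ℕ} (p : Equiv.Perm (Fin n)) : Matrix (Fin n) (Fin n) ℝ :=
  Matrix.of fun a b => if a = p b then 1 else 0

lemma permM_orth {n : ℕ} (p : Equiv.Perm (Fin n)) : (permM p)ᵀ * permM p = 1 := by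
  ext b b'
  simp only [Matrix.mul_apply, Matrix.transpose_apply, permM, Matrix.of_apply,
    ite_mul, one_mul, zero_mul, Finset.sum_ite_eq, Finset.mem_univ, if_true]
  simp [Matrix.one_apply, p.injective.eq_iff]

lemma permM_conj {n : ℕ} (p : Equiv.Perm (Fin n)) (A : Matrix (Fin n) (Fin n) ℝ) :
    (permM p)ᵀ * A * permM p = Matrix.of (fun a b => A (p a) (p b)) := by
  ext b b'
  have h1 : (A * permM p) = Matrix.of (fun a b => A a (p b)) := by
    ext a b
    simp [Matrix.mul_apply, permM, mul_ite]
  rw [Matrix.mul_assoc, h1]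
  simp [Matrix.mul_apply, permM, ite_mul]

lemma permM_conj_diagonal {n : ℕ} (p : Equiv.Perm (Fin n)) (w : Fin n → ℝ) :
    (permM p)ᵀ * Matrix.diagonal w * permM p = Matrix.diagonal (w ∘ p) := by
  rw [permM_conj]
  ext a b
  by_cases h : a = b
  · subst h; simp [Matrix.diagonal]
  · simp [Matrix.diagonal, h, p.injective.ne h]


lemma rotM_orth {m : ℕ} (c s : ℝ) (hcs : c^2 + s^2 = 1) :
    (rotM (m := m) c s)ᵀ * rotM c s = 1 := by
  ext p q
  rw [Matrix.mul_apply]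
  simp only [Matrix.transpose_apply]
  rw [Fin.sum_univ_succ, Fin.sum_univ_succ]
  simp only [Fin.succ_zero_eq_one, rotM_apply_ss, rotM_apply_zero, rotM_apply_one]
  induction p using Fin.cases with
  | zero =>
    induction q using Fin.cases with
    | zero =>
      simp [Matrix.one_apply, fun i : Fin m => ss_ne_zero i]
      nlinarith [hcs]
    | succ q' =>
      induction q' using Fin.cases with
      | zero =>
        simp [Matrix.one_apply, Fin.succ_zero_eq_one, one_ne_zero', one_ne_zero'.symm,
          fun i : Fin m => ss_ne_zero i, fun i : Fin m => ss_ne_one i]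
        ring
      | succ q'' =>
        simp [Matrix.one_apply, fun i : Fin m => ss_ne_zero i, (ss_ne_zero q'').symm,
          ss_ne_one q'', (ss_ne_one q'').symm]
  | succ p' =>
    induction p' using Fin.cases with
    | zero =>
      induction q using Fin.cases with
      | zero =>
        simp only [Fin.succ_zero_eq_one]
        simp [Matrix.one_apply, one_ne_zero', one_ne_zero'.symm,
          fun i : Fin m => ss_ne_zero i, fun i : Fin m => ss_ne_one i]
        ring
      | succ q' =>
        induction q' using Fin.cases with
        | zero =>
          simp only [Fin.succ_zero_eq_one]
          simp [Matrix.one_apply, one_ne_zero', fun i : Fin m => ss_ne_one i]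
          nlinarith [hcs]
        | succ q'' =>
          simp only [Fin.succ_zero_eq_one]
          simp [Matrix.one_apply, one_ne_zero', ss_ne_zero q'', (ss_ne_zero q'').symm,
            (ss_ne_one q'').symm, fun i : Fin m => ss_ne_one i]
    | succ p'' =>
      induction q using Fin.cases with
      | zero =>
        simp [Matrix.one_apply, ss_ne_zero p'', ss_ne_one p'', fun i : Fin m => ss_ne_zero i]
      | succ q' =>
        induction q' using Fin.cases with
        | zero =>
          simp only [Fin.succ_zero_eq_one]
          simp [Matrix.one_apply, ss_ne_zero p'', ss_ne_one p'', one_ne_zero',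
            fun i : Fin m => ss_ne_one i]
        | succ q'' =>
          simp only [rotM_apply_ss, ss_ne_zero, ss_ne_one, if_false,
            (ss_ne_zero p'').symm, (ss_ne_zero q'').symm, (ss_ne_one p'').symm, (ss_ne_one q'').symm]
          simp [Fin.succ_inj, Matrix.one_apply, ite_mul, mul_ite, Finset.sum_ite_eq,
            eq_comm]


def iota (m j : ℕ) : Fin (m+1) → Fin (m+2) :=
  fun i => if (i : ℕ) < j then ⟨(i : ℕ), by omega⟩ else ⟨(i : ℕ)+1, by omega⟩

def qmap (m j : ℕ) (p : Equiv.Perm (Fin (m+2))) : Fin (m+1) → Fin (m+1) :=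
  fun i => if (i : ℕ) = j then 0
    else ⟨(p.symm (iota m j i) : ℕ) - 1, by have := (p.symm (iota m j i)).isLt; omega⟩

theorem aux : ∀ (K : ℕ) (x z : Fin K → ℝ),
    Antitone x → Antitone z →
    (∀ m ≤ K, ∑ n ∈ Finset.univ.filter (fun n : Fin K => (n : ℕ) < m), z n ≤
        ∑ n ∈ Finset.univ.filter (fun n : Fin K => (n : ℕ) < m), x n) →
    (∑ n : Fin K, z n = ∑ n : Fin K, x n) →
    ∃ U : Matrix (Fin K) (Fin K) ℝ, Uᵀ * U = 1 ∧
      ∀ k, (Uᵀ * Matrix.diagonal x * U) k k = z k := by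
  intro K
  induction K with
  | zero =>
    intro x z _ _ _ _
    exact ⟨1, by simp, fun k => k.elim0⟩
  | succ K ih =>
    match K, ih with
    | 0, _ =>
      intro x z hx hz hmaj hsum
      refine ⟨1, by simp, fun k => ?_⟩
      have hk : k = 0 := Fin.fin_one_eq_zero k
      subst hk
      have : z 0 = x 0 := by simpa [Fin.sum_univ_one] using hsum
      simp [Matrix.one_apply, Matrix.diagonal, this]
    | (m+1), ih =>
      intro x z hx hz hmaj hsum
      classical
      set X : ℕ → ℝ := fun i => if h : i < m+2 then x ⟨i, h⟩ else 0 with hXdef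
      set Z : ℕ → ℝ := fun i => if h : i < m+2 then z ⟨i, h⟩ else 0 with hZdef
      have hXF : ∀ i : Fin (m+2), X ↑i = x i := by
        intro i; rw [hXdef]; simp [i.isLt]
      have hZF : ∀ i : Fin (m+2), Z ↑i = z i := by
        intro i; rw [hZdef]; simp [i.isLt]
      have hXanti : ∀ i i', i ≤ i' → i' ≤ m + 1 → X i' ≤ X i := by
        intro i i' h hi'
        have e1 : X i' = x ⟨i', by omega⟩ := by rw [hXdef]; simp [show i' < m+2 by omega]
        have e2 : X i = x ⟨i, by omega⟩ := by rw [hXdef]; simp [show i < m+2 by omega]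
        rw [e1, e2]
        exact hx (by simp [Fin.le_def, h])
      have hZanti : ∀ i i', i ≤ i' → i' ≤ m + 1 → Z i' ≤ Z i := by
        intro i i' h hi'
        have e1 : Z i' = z ⟨i', by omega⟩ := by rw [hZdef]; simp [show i' < m+2 by omega]
        have e2 : Z i = z ⟨i, by omega⟩ := by rw [hZdef]; simp [show i < m+2 by omega]
        rw [e1, e2]
        exact hz (by simp [Fin.le_def, h])
      have hmaj' : ∀ M ≤ m + 2, ∑ i ∈ Finset.range M, Z i ≤ ∑ i ∈ Finset.range M, X i := by
        intro M hM
        have := hmaj M hM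
        rwa [sum_filter_eq_range z M hM, sum_filter_eq_range x M hM, ← hZdef, ← hXdef] at this
      have hsum' : ∑ i ∈ Finset.range (m+2), Z i = ∑ i ∈ Finset.range (m+2), X i := by
        have := hsum
        rwa [sum_univ_eq_range z, sum_univ_eq_range x, ← hZdef, ← hXdef] at this
      -- find the pivot j
      have hlast : X (m+1) ≤ Z 0 := by
        have h1 := hmaj' (m+1) (by omega)
        have h2 := hsum'
        rw [Finset.sum_range_succ (f := Z) (n := m+1), Finset.sum_range_succ (f := X) (n := m+1)]
          at h2
        have h3 : X (m+1) ≤ Z (m+1) := by linarith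
        exact h3.trans (hZanti 0 (m+1) (by omega) (by omega))
      have hex : ∃ n, X (n+1) ≤ Z 0 := ⟨m, hlast⟩
      set j := Nat.find hex with hjdef
      have hj1 : X (j+1) ≤ Z 0 := Nat.find_spec hex
      have hjm : j ≤ m := Nat.find_min' hex hlast
      have hj2 : Z 0 ≤ X j := by
        rcases Nat.eq_zero_or_pos j with h0 | h0
        · rw [h0]
          have := hmaj' 1 (by omega)
          simpa [Finset.sum_range_one] using this
        · have hmin := Nat.find_min hex (show j - 1 < j by omega)
          push_neg at hmin
          have : j - 1 + 1 = j := by omega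
          rw [this] at hmin
          linarith
      -- rotation parameters
      obtain ⟨c, s, hcs, hrot⟩ : ∃ c s : ℝ, c^2 + s^2 = 1 ∧ c^2 * X j + s^2 * X (j+1) = Z 0 := by
        by_cases hab : X j ≤ X (j+1)
        · exact ⟨1, 0, by norm_num, by nlinarith⟩
        · push_neg at hab
          have hne : X j - X (j+1) ≠ 0 := by linarith
          refine ⟨Real.sqrt ((Z 0 - X (j+1))/(X j - X (j+1))),
            Real.sqrt ((X j - Z 0)/(X j - X (j+1))), ?_, ?_⟩
          · rw [Real.sq_sqrt (div_nonneg (by linarith) (by linarith)),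
              Real.sq_sqrt (div_nonneg (by linarith) (by linarith))]
            field_simp
            ring
          · rw [Real.sq_sqrt (div_nonneg (by linarith) (by linarith)),
              Real.sq_sqrt (div_nonneg (by linarith) (by linarith))]
            field_simp
            ring
      have hrot2 : s^2 * X j + c^2 * X (j+1) = X j + X (j+1) - Z 0 := by
        linear_combination (X j + X (j+1)) * hcs - hrot
      -- the permutation p bringing j, j+1 to positions 0, 1
      set jF2 : Fin (m+2) := ⟨j, by omega⟩ with hjF2
      set j1F2 : Fin (m+2) := ⟨j+1, by omega⟩ with hj1F2
      have hne01 : (0 : Fin (m+2)) ≠ 1 := by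
        simp [Fin.ext_iff]
      have hnej : j1F2 ≠ (0 : Fin (m+2)) := by simp [hj1F2, Fin.ext_iff]
      have hnejj : j1F2 ≠ jF2 := by simp [hj1F2, hjF2, Fin.ext_iff]
      have ht : (Equiv.swap (0 : Fin (m+2)) jF2) j1F2 = j1F2 :=
        Equiv.swap_apply_of_ne_of_ne hnej hnejj
      set p : Equiv.Perm (Fin (m+2)) :=
        (Equiv.swap (1 : Fin (m+2)) ((Equiv.swap (0 : Fin (m+2)) jF2) j1F2)).trans
          (Equiv.swap (0 : Fin (m+2)) jF2) with hpdef
      have hp0 : p 0 = jF2 := by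
        rw [hpdef]
        simp only [Equiv.trans_apply]
        rw [Equiv.swap_apply_of_ne_of_ne hne01 (by rw [ht]; exact hnej.symm)]
        exact Equiv.swap_apply_left _ _
      have hp1 : p 1 = j1F2 := by
        rw [hpdef]
        simp only [Equiv.trans_apply]
        rw [Equiv.swap_apply_left]
        rw [ht]
        rw [Equiv.swap_apply_of_ne_of_ne hnej hnejj]
      set x' : Fin (m+2) → ℝ := x ∘ ⇑p with hx'def
      have hx'0 : x' 0 = X j := by
        rw [hx'def]
        simp only [Function.comp_apply]
        rw [hp0, ← hXF jF2]
      have hx'1 : x' 1 = X (j+1) := by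
        rw [hx'def]
        simp only [Function.comp_apply]
        rw [hp1, ← hXF j1F2]
      -- reduced vectors and IH
      set y : Fin (m+1) → ℝ := fun i => natY j X Z ↑i with hydef
      set zt : Fin (m+1) → ℝ := fun k => z k.succ with hztdef
      have hzt_anti : Antitone zt := by
        intro i i' h
        rw [hztdef]
        exact hz (Fin.succ_le_succ_iff.mpr h)
      have hy_anti : Antitone y := by
        intro i i' h
        rw [hydef]
        exact natY_anti hXanti hjm hj1 hj2 ↑i ↑i' h (by omega)
      have hmajy : ∀ M ≤ m + 1,
          ∑ n ∈ Finset.univ.filter (fun n : Fin (m+1) => (n : ℕ) < M), zt n ≤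
          ∑ n ∈ Finset.univ.filter (fun n : Fin (m+1) => (n : ℕ) < M), y n := by
        intro M hM
        rw [sum_filter_eq_range zt M hM, sum_filter_eq_range y M hM]
        have e1 : ∀ i ∈ Finset.range M, (if h : i < m+1 then zt ⟨i, h⟩ else 0) = Z (i+1) := by
          intro i hi
          have hi' : i < m + 1 := by have := Finset.mem_range.mp hi; omega
          rw [dif_pos hi', hztdef, hZdef]
          simp [Fin.succ_mk, show i + 1 < m + 2 by omega]
        have e2 : ∀ i ∈ Finset.range M, (if h : i < m+1 then y ⟨i, h⟩ else 0) = natY j X Z i := by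
          intro i hi
          have hi' : i < m + 1 := by have := Finset.mem_range.mp hi; omega
          rw [dif_pos hi', hydef]
        rw [Finset.sum_congr rfl e1, Finset.sum_congr rfl e2]
        exact nat_majy hXanti hZanti hmaj' hjm hj1 hj2 M hM
      have hsumy : ∑ n : Fin (m+1), zt n = ∑ n : Fin (m+1), y n := by
        rw [sum_univ_eq_range zt, sum_univ_eq_range y]
        have e1 : ∀ i ∈ Finset.range (m+1), (if h : i < m+1 then zt ⟨i, h⟩ else 0) = Z (i+1) := by
          intro i hi
          have hi' : i < m + 1 := Finset.mem_range.mp hi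
          rw [dif_pos hi', hztdef, hZdef]
          simp [Fin.succ_mk, show i + 1 < m + 2 by omega]
        have e2 : ∀ i ∈ Finset.range (m+1),
            (if h : i < m+1 then y ⟨i, h⟩ else 0) = natY j X Z i := by
          intro i hi
          have hi' : i < m + 1 := Finset.mem_range.mp hi
          rw [dif_pos hi', hydef]
        rw [Finset.sum_congr rfl e1, Finset.sum_congr rfl e2]
        exact nat_sumy hjm hsum'
      obtain ⟨U', hU'o, hU'd⟩ := ih y zt hy_anti hzt_anti hmajy hsumy
      -- the inner permutation q matching w with y
      set w : Fin (m+1) → ℝ :=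
        fun k => if k = 0 then s^2 * x' 0 + c^2 * x' 1 else x' k.succ with hwdef
      have hι_ne : ∀ i : Fin (m+1), (i : ℕ) ≠ j →
          (p.symm (iota m j i) : ℕ) ≠ 0 ∧ (p.symm (iota m j i) : ℕ) ≠ 1 := by
        intro i hij
        constructor
        · intro h0
          have : p.symm (iota m j i) = 0 := by
            apply Fin.ext; simpa using h0
          have h1 : iota m j i = jF2 := by
            rw [← hp0, ← this, Equiv.apply_symm_apply]
          simp only [iota] at h1
          split_ifs at h1 with h2 <;>
            (rw [Fin.ext_iff] at h1; simp [hjF2] at h1; omega)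
        · intro h0
          have : p.symm (iota m j i) = 1 := by
            apply Fin.ext; simpa using h0
          have h1 : iota m j i = j1F2 := by
            rw [← hp1, ← this, Equiv.apply_symm_apply]
          simp only [iota] at h1
          split_ifs at h1 with h2 <;>
            (rw [Fin.ext_iff] at h1; simp [hj1F2] at h1; omega)
      have hq_ne : ∀ i : Fin (m+1), (i : ℕ) ≠ j →
          (qmap m j p i : ℕ) = (p.symm (iota m j i) : ℕ) - 1 := by
        intro i hij
        simp [qmap, hij]
      have hq : ∀ i, w (qmap m j p i) = y i := by
        intro i
        by_cases hij : (i : ℕ) = j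
        · have h1 : qmap m j p i = 0 := by simp [qmap, hij]
          rw [h1, hwdef]
          simp only [if_pos rfl]
          rw [hydef]
          simp only
          rw [natY_eq hij, hx'0, hx'1]
          exact hrot2
        · obtain ⟨hv0, hv1⟩ := hι_ne i hij
          have hvge : 1 ≤ (p.symm (iota m j i) : ℕ) := by omega
          have h1 : qmap m j p i ≠ 0 := by
            intro h0
            have hqv := hq_ne i hij
            rw [h0] at hqv
            simp at hqv
            omega
          rw [hwdef]
          simp only [if_neg h1]
          have h2 : (qmap m j p i).succ = p.symm (iota m j i) := by
            apply Fin.ext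
            rw [Fin.val_succ, hq_ne i hij]
            omega
          rw [h2, hx'def]
          simp only [Function.comp_apply, Equiv.apply_symm_apply]
          rw [hydef]
          simp only
          rcases Nat.lt_or_ge (i : ℕ) j with h3 | h3
          · rw [natY_lt h3]
            have : iota m j i = ⟨(i : ℕ), by omega⟩ := by simp [iota, h3]
            rw [this, ← hXF ⟨(i : ℕ), by omega⟩]
          · have h4 : j < (i : ℕ) := by omega
            rw [natY_gt h4]
            have hnlt : ¬ ((i : ℕ) < j) := by omega
            have : iota m j i = ⟨(i : ℕ)+1, by omega⟩ := by simp [iota, hnlt]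
            rw [this, ← hXF ⟨(i : ℕ)+1, by omega⟩]
      have hqinj : Function.Injective (qmap m j p) := by
        intro i i' he
        by_cases h1 : (i : ℕ) = j <;> by_cases h2 : (i' : ℕ) = j
        · apply Fin.ext; omega
        · exfalso
          have e1 : qmap m j p i = 0 := by simp [qmap, h1]
          have := hq_ne i' h2
          obtain ⟨hv0, hv1⟩ := hι_ne i' h2
          rw [e1] at he
          rw [Fin.ext_iff] at he
          simp at he
          omega
        · exfalso
          have e1 : qmap m j p i' = 0 := by simp [qmap, h2]
          have := hq_ne i h1
          obtain ⟨hv0, hv1⟩ := hι_ne i h1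
          rw [e1] at he
          rw [Fin.ext_iff] at he
          rw [this, Fin.val_zero] at he
          omega
        · have e1 := hq_ne i h1
          have e2 := hq_ne i' h2
          obtain ⟨hv0, hv1⟩ := hι_ne i h1
          obtain ⟨hv0', hv1'⟩ := hι_ne i' h2
          rw [Fin.ext_iff, e1, e2] at he
          have : p.symm (iota m j i) = p.symm (iota m j i') := by apply Fin.ext; omega
          have hII : iota m j i = iota m j i' := p.symm.injective this
          simp only [iota] at hII
          apply Fin.ext
          split_ifs at hII with ha hb hb <;> (rw [Fin.ext_iff] at hII; simp at hII; omega)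
      have hqbij : Function.Bijective (qmap m j p) :=
        (Fintype.bijective_iff_injective_and_card (qmap m j p)).mpr ⟨hqinj, rfl⟩
      set qe : Equiv.Perm (Fin (m+1)) := Equiv.ofBijective (qmap m j p) hqbij with hqedef
      have hwq : w ∘ ⇑qe = y := by
        funext i
        exact hq i
      -- assemble
      set W : Matrix (Fin (m+1)) (Fin (m+1)) ℝ := permM qe * U' with hWdef
      have hWo : Wᵀ * W = 1 := orth_mul _ _ (permM_orth qe) hU'o
      set U : Matrix (Fin (m+2)) (Fin (m+2)) ℝ := permM p * rotM c s * blockV W with hUdef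
      refine ⟨U, ?_, ?_⟩
      · rw [hUdef]
        exact orth_mul _ _ (orth_mul _ _ (permM_orth p) (rotM_orth c s hcs)) (blockV_orth W hWo)
      · intro k
        have hconj : Uᵀ * Matrix.diagonal x * U
            = (blockV W)ᵀ * ((rotM c s)ᵀ * Matrix.diagonal x' * rotM c s) * blockV W := by
          rw [hUdef, conj_mul, conj_mul, permM_conj_diagonal p x, ← hx'def]
        rw [hconj]
        induction k using Fin.cases with
        | zero =>
          rw [blockV_conj_00, rot_conj_00, hx'0, hx'1, hrot, ← hZF 0]
          rfl
        | succ k' =>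
          rw [blockV_conj_ss]
          have hN : Matrix.of (fun a b : Fin (m+1) =>
              (((rotM c s)ᵀ * Matrix.diagonal x' * rotM c s
                : Matrix (Fin (m+2)) (Fin (m+2)) ℝ)) a.succ b.succ) = Matrix.diagonal w := by
            ext a b
            rw [Matrix.of_apply, rot_conj_succ_succ, hwdef]
          rw [hN, hWdef, conj_mul, permM_conj_diagonal qe w, hwq]
          rw [hU'd k', hztdef]
end MajAux

/-- If `x` majorizes `z` (both antitone), then there exists a real orthogonal matrix `U`
such that the diagonal of `Uᵀ * diagonal x * U` is `z` (Schur–Horn / Viswanath's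
construction from T-transforms). -/
theorem majorization_orthogonal_diagonal (K : ℕ) (x z : Fin K → ℝ)
    (hx : Antitone x) (hz : Antitone z)
    (hmaj : ∀ m ≤ K, ∑ n ∈ Finset.univ.filter (fun n : Fin K => (n : ℕ) < m), z n ≤
        ∑ n ∈ Finset.univ.filter (fun n : Fin K => (n : ℕ) < m), x n)
    (hsum : ∑ n : Fin K, z n = ∑ n : Fin K, x n) :
    ∃ U : Matrix (Fin K) (Fin K) ℝ, Uᵀ * U = 1 ∧
      ∀ k, (Uᵀ * Matrix.diagonal x * U) k k = z k :=
  MajAux.aux K x z hx hz hmaj hsum
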